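/- Let G₁, G₂ ∈ ℂ^{m×n} with rank(G₁) = rank(G₂) < min{m,n}. Then ‖G₂⁺ − G₁⁺‖ ≤ ((1+√5)/2) · ‖G₂⁺‖ · ‖G₁⁺‖ · ‖G₂ − G₁‖ in the spectral norm. -/
import Mathlib


open Matrix

open scoped Matrix.Norms.L2Operator ComplexInnerProductSpace

/-- `P` is the Moore–Penrose pseudoinverse of `A` (the four Penrose conditions). -/
def IsMoorePenrose {m n : ℕ} (A : Matrix (Fin m) (Fin n) ℂ) (P : Matrix (Fin n) (Fin m) ℂ) :
    Prop :=
  A * P * A = A ∧ P * A * P = P ∧ (A * P)ᴴ = A * P ∧ (P * A)ᴴ = P * A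

/-- The spectral norm (ℓ²-operator norm) of a complex matrix. -/
noncomputable def specNorm {m n : ℕ} (A : Matrix (Fin m) (Fin n) ℂ) : ℝ :=
  ‖LinearMap.toContinuousLinearMap (Matrix.toEuclideanLin A)‖

lemma specNorm_eq {m n : ℕ} (A : Matrix (Fin m) (Fin n) ℂ) : specNorm A = ‖A‖ := rfl

noncomputable def LL {a b : ℕ} (A : Matrix (Fin a) (Fin b) ℂ) :
    EuclideanSpace ℂ (Fin b) →ₗ[ℂ] EuclideanSpace ℂ (Fin a) := Matrix.toEuclideanLin A

lemma LL_apply_le {a b : ℕ} (A : Matrix (Fin a) (Fin b) ℂ) (x : EuclideanSpace ℂ (Fin b)) :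
    ‖LL A x‖ ≤ ‖A‖ * ‖x‖ := by
  rw [Matrix.l2_opNorm_def]
  exact ((Matrix.toEuclideanLin.trans LinearMap.toContinuousLinearMap) A).le_opNorm x

lemma LL_mul {a b c : ℕ} (A : Matrix (Fin a) (Fin b) ℂ) (B : Matrix (Fin b) (Fin c) ℂ)
    (x : EuclideanSpace ℂ (Fin c)) : LL (A * B) x = LL A (LL B x) := by
  simp [LL, Matrix.toEuclideanLin_apply, Matrix.mulVec_mulVec]

lemma LL_sub {a b : ℕ} (A B : Matrix (Fin a) (Fin b) ℂ) (x : EuclideanSpace ℂ (Fin b)) :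
    LL (A - B) x = LL A x - LL B x := by
  have h : Matrix.toEuclideanLin (A - B) =
      Matrix.toEuclideanLin A - Matrix.toEuclideanLin B := map_sub _ _ _
  simp [LL, h]

lemma LL_add {a b : ℕ} (A B : Matrix (Fin a) (Fin b) ℂ) (x : EuclideanSpace ℂ (Fin b)) :
    LL (A + B) x = LL A x + LL B x := by
  have h : Matrix.toEuclideanLin (A + B) =
      Matrix.toEuclideanLin A + Matrix.toEuclideanLin B := map_add _ _ _
  simp [LL, h]

lemma LL_inner {a b : ℕ} (A : Matrix (Fin a) (Fin b) ℂ) (x : EuclideanSpace ℂ (Fin b))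
    (y : EuclideanSpace ℂ (Fin a)) : ⟪LL A x, y⟫ = ⟪x, LL Aᴴ y⟫ := by
  rw [LL, LL, Matrix.toEuclideanLin_conjTranspose_eq_adjoint]
  exact (LinearMap.adjoint_inner_right _ _ _).symm

lemma LL_one {a : ℕ} (x : EuclideanSpace ℂ (Fin a)) : LL 1 x = x := by
  simp [LL, Matrix.toEuclideanLin_apply]

lemma norm_le_bound {a b : ℕ} (A : Matrix (Fin a) (Fin b) ℂ) {c : ℝ} (hc : 0 ≤ c)
    (h : ∀ x, ‖LL A x‖ ≤ c * ‖x‖) : ‖A‖ ≤ c := by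
  rw [Matrix.l2_opNorm_def]
  exact ContinuousLinearMap.opNorm_le_bound _ hc h

lemma rank_eq_finrank_range_LL {a b : ℕ} (A : Matrix (Fin a) (Fin b) ℂ) :
    A.rank = Module.finrank ℂ (LinearMap.range (LL A)) := by
  rw [Matrix.rank_eq_finrank_range_toLin A (PiLp.basisFun 2 ℂ (Fin a)) (PiLp.basisFun 2 ℂ (Fin b))]
  rw [LL, Matrix.toEuclideanLin_eq_toLin]

section Proj
variable {k : ℕ}

lemma proj_idem_apply {A : Matrix (Fin k) (Fin k) ℂ} (hA2 : A * A = A)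
    (x : EuclideanSpace ℂ (Fin k)) : LL A (LL A x) = LL A x := by
  rw [← LL_mul, hA2]

lemma proj_pyth {A : Matrix (Fin k) (Fin k) ℂ} (hAh : Aᴴ = A) (hA2 : A * A = A)
    (x : EuclideanSpace ℂ (Fin k)) :
    ‖LL A x‖ ^ 2 + ‖x - LL A x‖ ^ 2 = ‖x‖ ^ 2 := by
  have horth : ⟪LL A x, x - LL A x⟫ = 0 := by
    have h0 : LL A (x - LL A x) = 0 := by
      rw [map_sub, proj_idem_apply hA2, sub_self]
    rw [LL_inner, hAh, h0, inner_zero_right]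
  have hsum : LL A x + (x - LL A x) = x := by abel
  have := norm_add_sq (𝕜 := ℂ) (LL A x) (x - LL A x)
  rw [hsum, horth] at this
  simp at this
  linarith

lemma proj_apply_le {A : Matrix (Fin k) (Fin k) ℂ} (hAh : Aᴴ = A) (hA2 : A * A = A)
    (x : EuclideanSpace ℂ (Fin k)) : ‖LL A x‖ ≤ ‖x‖ := by
  have := proj_pyth hAh hA2 x
  nlinarith [norm_nonneg (LL A x), norm_nonneg x, sq_nonneg ‖x - LL A x‖]

lemma proj_sub_le {A : Matrix (Fin k) (Fin k) ℂ} (hAh : Aᴴ = A) (hA2 : A * A = A)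
    (x : EuclideanSpace ℂ (Fin k)) : ‖x - LL A x‖ ≤ ‖x‖ := by
  have := proj_pyth hAh hA2 x
  nlinarith [norm_nonneg (x - LL A x), norm_nonneg x, sq_nonneg ‖LL A x‖]

lemma LL_one_sub_mul {A B : Matrix (Fin k) (Fin k) ℂ} (x : EuclideanSpace ℂ (Fin k)) :
    LL ((1 - A) * B) x = LL B x - LL A (LL B x) := by
  rw [LL_mul, LL_sub, LL_one]

/-- purely numeric part of the gap lemma -/
lemma gap_numeric {δ p q r s t xx : ℝ} (hδ0 : 0 ≤ δ) (hδ1 : δ < 1) (hp0 : 0 ≤ p)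
    (hq0 : 0 ≤ q) (hr0 : 0 ≤ r) (hs0 : 0 ≤ s) (ht0 : 0 ≤ t)
    (h1 : t ≤ δ * p) (h2 : q ^ 2 + t ^ 2 = p ^ 2) (h3 : q ^ 2 ≤ p * r)
    (h4 : r ^ 2 + s ^ 2 = q ^ 2) (hqx : q ≤ xx) : s ≤ δ * xx := by
  have ht2 : t ^ 2 ≤ δ ^ 2 * p ^ 2 := by nlinarith
  have hs2 : s ^ 2 ≤ δ ^ 2 * q ^ 2 := by
    rcases eq_or_lt_of_le hq0 with hq' | hq'
    · nlinarith [sq_nonneg r]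
    · have hq4 : q ^ 2 * q ^ 2 ≤ (p * r) * (p * r) := by nlinarith
      have hδ2 : (0:ℝ) ≤ 1 - δ ^ 2 := by nlinarith
      have hpq : (1 - δ ^ 2) * p ^ 2 ≤ q ^ 2 := by nlinarith
      have hmul : (1 - δ ^ 2) * p ^ 2 * r ^ 2 ≤ q ^ 2 * r ^ 2 :=
        mul_le_mul_of_nonneg_right hpq (sq_nonneg r)
      have h6 : (1 - δ ^ 2) * (q ^ 2 * q ^ 2) ≤ (1 - δ ^ 2) * ((p * r) * (p * r)) :=
        mul_le_mul_of_nonneg_left hq4 hδ2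
      have key : q ^ 2 * ((1 - δ ^ 2) * q ^ 2 - r ^ 2) ≤ 0 := by nlinarith [h6, hmul]
      have h5 : (1 - δ ^ 2) * q ^ 2 - r ^ 2 ≤ 0 := by nlinarith [mul_pos hq' hq']
      linarith
  have hsq : s ≤ δ * q := by
    have h7 : s ^ 2 ≤ (δ * q) ^ 2 := by nlinarith
    exact (pow_le_pow_iff_left₀ hs0 (mul_nonneg hδ0 hq0) two_ne_zero).mp h7
  calc s ≤ δ * q := hsq
    _ ≤ δ * xx := by nlinarith

/-- Key lemma: for orthogonal projectors of equal rank, the "gap" is symmetric. -/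
lemma gap_le {A B : Matrix (Fin k) (Fin k) ℂ} (hAh : Aᴴ = A) (hA2 : A * A = A)
    (hBh : Bᴴ = B) (hB2 : B * B = B) (hrank : A.rank = B.rank) :
    ‖(1 - A) * B‖ ≤ ‖(1 - B) * A‖ := by
  set δ := ‖(1 - B) * A‖ with hδ
  have hδ0 : (0:ℝ) ≤ δ := norm_nonneg _
  have hU : ∀ u : EuclideanSpace ℂ (Fin k), u ∈ LinearMap.range (LL A) →
      ‖u - LL B u‖ ≤ δ * ‖u‖ := by
    rintro u ⟨w, rfl⟩
    have hu : LL A (LL A w) = LL A w := proj_idem_apply hA2 w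
    calc ‖LL A w - LL B (LL A w)‖ = ‖LL ((1 - B) * A) (LL A w)‖ := by
          rw [LL_one_sub_mul, hu]
      _ ≤ δ * ‖LL A w‖ := LL_apply_le _ _
  rcases le_or_gt 1 δ with hδ1 | hδ1
  · apply norm_le_bound _ hδ0
    intro x
    rw [LL_one_sub_mul]
    calc ‖LL B x - LL A (LL B x)‖ ≤ ‖LL B x‖ := proj_sub_le hAh hA2 _
      _ ≤ ‖x‖ := proj_apply_le hBh hB2 _
      _ ≤ δ * ‖x‖ := by nlinarith [norm_nonneg x]
  · set U := LinearMap.range (LL A) with hUdef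
    set V := LinearMap.range (LL B) with hVdef
    have hfr : Module.finrank ℂ U = Module.finrank ℂ V := by
      rw [hUdef, hVdef, ← rank_eq_finrank_range_LL, ← rank_eq_finrank_range_LL, hrank]
    let T : U →ₗ[ℂ] V :=
      ((LL B).domRestrict U).codRestrict V (fun u => LinearMap.mem_range_self _ _)
    have hinj : Function.Injective T := by
      rw [← LinearMap.ker_eq_bot, LinearMap.ker_eq_bot']
      intro u hu0
      have h0 : LL B (↑u : EuclideanSpace ℂ (Fin k)) = 0 := congrArg Subtype.val hu0
      have h1 := hU ↑u u.2
      rw [h0, sub_zero] at h1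
      have : ‖(↑u : EuclideanSpace ℂ (Fin k))‖ = 0 := by
        nlinarith [norm_nonneg (↑u : EuclideanSpace ℂ (Fin k))]
      exact Subtype.ext (norm_eq_zero.mp this)
    have hsurj : Function.Surjective T :=
      (LinearMap.injective_iff_surjective_of_finrank_eq_finrank hfr).mp hinj
    apply norm_le_bound _ hδ0
    intro x
    rw [LL_one_sub_mul]
    set v := LL B x with hvdef
    have hvV : v ∈ V := LinearMap.mem_range_self _ _
    have hBv : LL B v = v := proj_idem_apply hB2 x
    have hqx : ‖v‖ ≤ ‖x‖ := proj_apply_le hBh hB2 x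
    obtain ⟨u, hu⟩ := hsurj ⟨v, hvV⟩
    have huv : LL B (↑u : EuclideanSpace ℂ (Fin k)) = v := congrArg Subtype.val hu
    obtain ⟨w, hw⟩ := u.2
    have hAu : LL A (↑u : EuclideanSpace ℂ (Fin k)) = ↑u := by
      rw [← hw]; exact proj_idem_apply hA2 w
    have h1 : ‖(↑u : EuclideanSpace ℂ (Fin k)) - v‖ ≤ δ * ‖(↑u : EuclideanSpace ℂ (Fin k))‖ := by
      have := hU ↑u u.2; rwa [huv] at this
    have h2 : ‖v‖ ^ 2 + ‖(↑u : EuclideanSpace ℂ (Fin k)) - v‖ ^ 2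
        = ‖(↑u : EuclideanSpace ℂ (Fin k))‖ ^ 2 := by
      have := proj_pyth hBh hB2 (↑u : EuclideanSpace ℂ (Fin k))
      rwa [huv] at this
    have h3 : ‖v‖ ^ 2 ≤ ‖(↑u : EuclideanSpace ℂ (Fin k))‖ * ‖LL A v‖ := by
      have e1 := LL_inner A (↑u : EuclideanSpace ℂ (Fin k)) v
      rw [hAh, hAu] at e1
      -- e1 : ⟪↑u, v⟫ = ⟪↑u, LL A v⟫
      have e2 := LL_inner B (↑u : EuclideanSpace ℂ (Fin k)) v
      rw [hBh, huv, hBv] at e2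
      -- e2 : ⟪v, v⟫ = ⟪↑u, v⟫
      have e3 : ⟪(↑u : EuclideanSpace ℂ (Fin k)), LL A v⟫ = (‖v‖ : ℂ) ^ 2 := by
        rw [← e1, ← e2, inner_self_eq_norm_sq_to_K]
        norm_cast
      have e4 := norm_inner_le_norm (𝕜 := ℂ) (↑u : EuclideanSpace ℂ (Fin k)) (LL A v)
      rw [e3] at e4
      simpa using e4
    have h4 := proj_pyth hAh hA2 v
    exact gap_numeric hδ0 hδ1 (norm_nonneg _) (norm_nonneg _) (norm_nonneg _) (norm_nonneg _)
      (norm_nonneg _) h1 h2 h3 h4 hqx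
end Proj

lemma LL_zero {a b : ℕ} (x : EuclideanSpace ℂ (Fin b)) :
    LL (0 : Matrix (Fin a) (Fin b) ℂ) x = 0 := by
  have h : Matrix.toEuclideanLin (0 : Matrix (Fin a) (Fin b) ℂ) = 0 := map_zero _
  simp [LL, h]

lemma LL_one_sub_mul' {k a : ℕ} (A : Matrix (Fin k) (Fin k) ℂ)
    (M : Matrix (Fin k) (Fin a) ℂ) (x : EuclideanSpace ℂ (Fin a)) :
    LL ((1 - A) * M) x = LL M x - LL A (LL M x) := by
  rw [LL_mul, LL_sub, LL_one]

lemma one_sub_proj_mul_le {k a : ℕ} {A : Matrix (Fin k) (Fin k) ℂ} (hAh : Aᴴ = A)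
    (hA2 : A * A = A) (M : Matrix (Fin k) (Fin a) ℂ) : ‖(1 - A) * M‖ ≤ ‖M‖ := by
  apply norm_le_bound _ (norm_nonneg M)
  intro x
  rw [LL_one_sub_mul']
  calc ‖LL M x - LL A (LL M x)‖ ≤ ‖LL M x‖ := proj_sub_le hAh hA2 _
    _ ≤ ‖M‖ * ‖x‖ := LL_apply_le _ _

lemma mul_one_sub_proj_le {k a : ℕ} {A : Matrix (Fin k) (Fin k) ℂ} (hAh : Aᴴ = A)
    (hA2 : A * A = A) (M : Matrix (Fin a) (Fin k) ℂ) : ‖M * (1 - A)‖ ≤ ‖M‖ := by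
  apply norm_le_bound _ (norm_nonneg M)
  intro x
  rw [LL_mul, LL_sub, LL_one]
  calc ‖LL M (x - LL A x)‖ ≤ ‖M‖ * ‖x - LL A x‖ := LL_apply_le _ _
    _ ≤ ‖M‖ * ‖x‖ := mul_le_mul_of_nonneg_left (proj_sub_le hAh hA2 x) (norm_nonneg M)

lemma wedin_numeric {β a b xx F MM NN : ℝ} (hβ : 0 ≤ β) (ha : 0 ≤ a) (hb : 0 ≤ b)
    (hF0 : 0 ≤ F) (hM0 : 0 ≤ MM) (hN0 : 0 ≤ NN) (hx0 : 0 ≤ xx)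
    (hF2 : F ^ 2 = MM ^ 2 + NN ^ 2) (hM : MM ≤ β * a + β * b) (hN : NN ≤ β * a)
    (hab : a ^ 2 + b ^ 2 = xx ^ 2) : F ≤ (1 + Real.sqrt 5) / 2 * β * xx := by
  have h5 : Real.sqrt 5 ^ 2 = 5 := Real.sq_sqrt (by norm_num)
  have h50 : (0:ℝ) ≤ Real.sqrt 5 := Real.sqrt_nonneg 5
  have hM2 : MM ^ 2 ≤ (β * a + β * b) ^ 2 := by nlinarith [mul_nonneg hβ ha, mul_nonneg hβ hb]
  have hN2 : NN ^ 2 ≤ (β * a) ^ 2 := by nlinarith [mul_nonneg hβ ha]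
  set s := Real.sqrt 5 with hs
  have q0 : (0:ℝ) ≤ ((s - 1) * a - 2 * b) ^ 2 := sq_nonneg _
  have q1 : ((s - 1) * a - 2 * b) ^ 2
      = (s ^ 2 - 2 * s + 1) * a ^ 2 - (4 * s - 4) * (a * b) + 4 * b ^ 2 := by ring
  rw [h5] at q1
  rw [q1] at q0
  have q3 : (0:ℝ) ≤ (1 + s) * ((5 - 2 * s + 1) * a ^ 2 - (4 * s - 4) * (a * b) + 4 * b ^ 2) :=
    mul_nonneg (by linarith) q0
  have q4 : (1 + s) * ((5 - 2 * s + 1) * a ^ 2 - (4 * s - 4) * (a * b) + 4 * b ^ 2)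
      = (6 + 4 * s - 2 * s ^ 2) * a ^ 2 - (4 * s ^ 2 - 4) * (a * b) + (4 + 4 * s) * b ^ 2 := by
    ring
  rw [q4, h5] at q3
  have q6 : (0:ℝ) ≤ β ^ 2 * ((6 + 4 * s - 2 * 5) * a ^ 2 - (4 * 5 - 4) * (a * b)
      + (4 + 4 * s) * b ^ 2) := mul_nonneg (sq_nonneg β) q3
  have hx2 : ((1 + s) / 2 * β * xx) ^ 2 = (1 + 2 * s + s ^ 2) / 4 * (β ^ 2 * xx ^ 2) := by ring
  rw [h5, ← hab] at hx2
  have hkey : (β * a + β * b) ^ 2 + (β * a) ^ 2 ≤ ((1 + s) / 2 * β * xx) ^ 2 := by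
    rw [hx2]; nlinarith [q6]
  have hF2' : F ^ 2 ≤ ((1 + Real.sqrt 5) / 2 * β * xx) ^ 2 := by linarith
  have hc0 : 0 ≤ (1 + Real.sqrt 5) / 2 * β * xx := by positivity
  exact (pow_le_pow_iff_left₀ hF0 hc0 two_ne_zero).mp hF2'


/-- Wedin, rank-deficient case.  Let `G₁, G₂ ∈ ℂ^{m×n}` with
`rank G₁ = rank G₂ < min{m,n}`.  Then
`‖G₂⁺ − G₁⁺‖ ≤ ((1+√5)/2) · ‖G₂⁺‖ · ‖G₁⁺‖ · ‖G₂ − G₁‖` in the spectral norm. -/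
theorem pinv_perturbation_rank_deficient
    {m n : ℕ} (G₁ G₂ : Matrix (Fin m) (Fin n) ℂ)
    (heq : G₁.rank = G₂.rank) (hlt : G₁.rank < min m n)
    (P₁ P₂ : Matrix (Fin n) (Fin m) ℂ)
    (hP₁ : IsMoorePenrose G₁ P₁) (hP₂ : IsMoorePenrose G₂ P₂) :
    specNorm (P₂ - P₁) ≤
      (1 + Real.sqrt 5) / 2 * specNorm P₂ * specNorm P₁ * specNorm (G₂ - G₁) := by
  clear hlt
  obtain ⟨h11, h12, h13, h14⟩ := hP₁
  obtain ⟨h21, h22, h23, h24⟩ := hP₂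
  have h11' : G₁ * (P₁ * G₁) = G₁ := by rw [← Matrix.mul_assoc]; exact h11
  have h12' : P₁ * (G₁ * P₁) = P₁ := by rw [← Matrix.mul_assoc]; exact h12
  have h21' : G₂ * (P₂ * G₂) = G₂ := by rw [← Matrix.mul_assoc]; exact h21
  have h22' : P₂ * (G₂ * P₂) = P₂ := by rw [← Matrix.mul_assoc]; exact h22
  have hQ₁h : (G₁ * P₁)ᴴ = G₁ * P₁ := h13
  have hQ₁2 : (G₁ * P₁) * (G₁ * P₁) = G₁ * P₁ := by rw [← Matrix.mul_assoc, h11]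
  have hQ₂h : (G₂ * P₂)ᴴ = G₂ * P₂ := h23
  have hQ₂2 : (G₂ * P₂) * (G₂ * P₂) = G₂ * P₂ := by rw [← Matrix.mul_assoc, h21]
  have hR₁h : (P₁ * G₁)ᴴ = P₁ * G₁ := h14
  have hR₁2 : (P₁ * G₁) * (P₁ * G₁) = P₁ * G₁ := by rw [← Matrix.mul_assoc, h12]
  have hR₂h : (P₂ * G₂)ᴴ = P₂ * G₂ := h24
  have hR₂2 : (P₂ * G₂) * (P₂ * G₂) = P₂ * G₂ := by rw [← Matrix.mul_assoc, h22]
  -- rank facts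
  have hrQ : (G₁ * P₁).rank = (G₂ * P₂).rank := by
    have e1a := Matrix.rank_mul_le_left (G₁ * P₁) G₁
    rw [h11] at e1a
    have e1b := Matrix.rank_mul_le_left G₁ P₁
    have e2a := Matrix.rank_mul_le_left (G₂ * P₂) G₂
    rw [h21] at e2a
    have e2b := Matrix.rank_mul_le_left G₂ P₂
    omega
  have hrR : (P₁ * G₁).rank = (P₂ * G₂).rank := by
    have f1a := Matrix.rank_mul_le_right G₁ (P₁ * G₁)
    rw [h11'] at f1a
    have f1b := Matrix.rank_mul_le_right P₁ G₁
    have f2a := Matrix.rank_mul_le_right G₂ (P₂ * G₂)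
    rw [h21'] at f2a
    have f2b := Matrix.rank_mul_le_right P₂ G₂
    omega
  -- the three pieces
  set T1 := P₂ * ((G₁ - G₂) * P₁) with hT1def
  set T2 := P₂ * ((G₂ * P₂) * (1 - G₁ * P₁)) with hT2def
  set T3 := ((P₂ * G₂ - 1) * (P₁ * G₁)) * P₁ with hT3def
  have i1 : T1 = P₂ * (G₁ * P₁) - P₂ * (G₂ * P₁) := by
    rw [hT1def, Matrix.sub_mul, Matrix.mul_sub]
  have i2 : T2 = P₂ - P₂ * (G₁ * P₁) := by
    rw [hT2def, ← Matrix.mul_assoc P₂ (G₂ * P₂) (1 - G₁ * P₁), h22', Matrix.mul_sub,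
      Matrix.mul_one]
  have i3 : T3 = P₂ * (G₂ * P₁) - P₁ := by
    rw [hT3def, Matrix.mul_assoc (P₂ * G₂ - 1) (P₁ * G₁) P₁, h12, Matrix.sub_mul,
      Matrix.one_mul, Matrix.mul_assoc P₂ G₂ P₁]
  have idec : P₂ - P₁ = (T1 + T2) + T3 := by rw [i1, i2, i3]; abel
  -- orthogonality of ranges
  have e22 := congrArg Matrix.conjTranspose h22
  rw [Matrix.conjTranspose_mul, h24] at e22
  have hP2T3 : P₂ᴴ * T3 = 0 := by
    have h0 : P₂ᴴ * (P₂ * G₂ - 1) = 0 := by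
      rw [Matrix.mul_sub, Matrix.mul_one, e22, sub_self]
    calc P₂ᴴ * T3 = (P₂ᴴ * (P₂ * G₂ - 1)) * ((P₁ * G₁) * P₁) := by
          rw [hT3def]; simp only [Matrix.mul_assoc]
      _ = 0 := by rw [h0, Matrix.zero_mul]
  have hMN : (T1 + T2)ᴴ * T3 = 0 := by
    have gen : ∀ W : Matrix (Fin m) (Fin m) ℂ, (P₂ * W)ᴴ * T3 = 0 := fun W => by
      rw [Matrix.conjTranspose_mul, Matrix.mul_assoc, hP2T3, Matrix.mul_zero]
    rw [Matrix.conjTranspose_add, Matrix.add_mul, hT1def, hT2def, gen, gen, add_zero]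
  -- domain splitting
  have j1 : T1 * (G₁ * P₁) = T1 := by
    rw [hT1def]; simp only [Matrix.mul_assoc, h12']
  have j2 : T2 * (G₁ * P₁) = 0 := by
    have h0 : (1 - G₁ * P₁) * (G₁ * P₁) = 0 := by
      rw [Matrix.sub_mul, Matrix.one_mul, hQ₁2, sub_self]
    rw [hT2def]
    calc (P₂ * ((G₂ * P₂) * (1 - G₁ * P₁))) * (G₁ * P₁)
        = P₂ * ((G₂ * P₂) * ((1 - G₁ * P₁) * (G₁ * P₁))) := by simp only [Matrix.mul_assoc]
      _ = 0 := by rw [h0, Matrix.mul_zero, Matrix.mul_zero]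
  have j3 : T3 * (G₁ * P₁) = T3 := by
    rw [hT3def]; simp only [Matrix.mul_assoc, h12']
  -- norm bounds
  set β := ‖P₂‖ * (‖G₂ - G₁‖ * ‖P₁‖) with hβdef
  have hβ0 : (0:ℝ) ≤ β := by positivity
  have hEnorm : ‖G₁ - G₂‖ = ‖G₂ - G₁‖ := norm_sub_rev _ _
  have b1 : ‖T1‖ ≤ β := by
    calc ‖T1‖ ≤ ‖P₂‖ * ‖(G₁ - G₂) * P₁‖ := by rw [hT1def]; exact Matrix.l2_opNorm_mul _ _
      _ ≤ ‖P₂‖ * (‖G₁ - G₂‖ * ‖P₁‖) :=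
          mul_le_mul_of_nonneg_left (Matrix.l2_opNorm_mul _ _) (norm_nonneg _)
      _ = β := by rw [hEnorm]
  have b2 : ‖T2‖ ≤ β := by
    have c1 : ‖(G₂ * P₂) * (1 - G₁ * P₁)‖ = ‖(1 - G₁ * P₁) * (G₂ * P₂)‖ := by
      calc ‖(G₂ * P₂) * (1 - G₁ * P₁)‖ = ‖((G₂ * P₂) * (1 - G₁ * P₁))ᴴ‖ :=
            (Matrix.l2_opNorm_conjTranspose _).symm
        _ = ‖(1 - G₁ * P₁) * (G₂ * P₂)‖ := by
            rw [Matrix.conjTranspose_mul, Matrix.conjTranspose_sub, Matrix.conjTranspose_one,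
              hQ₁h, hQ₂h]
    have c2 : ‖(1 - G₁ * P₁) * (G₂ * P₂)‖ ≤ ‖(1 - G₂ * P₂) * (G₁ * P₁)‖ :=
      gap_le hQ₁h hQ₁2 hQ₂h hQ₂2 hrQ
    have z1 : (1 - G₂ * P₂) * (G₂ * P₁) = 0 := by
      rw [Matrix.sub_mul, Matrix.one_mul, ← Matrix.mul_assoc (G₂ * P₂) G₂ P₁, h21, sub_self]
    have c3 : (1 - G₂ * P₂) * (G₁ * P₁) = (1 - G₂ * P₂) * ((G₁ - G₂) * P₁) := by
      rw [Matrix.sub_mul G₁ G₂ P₁, Matrix.mul_sub, z1, sub_zero]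
    have c4 : ‖(1 - G₂ * P₂) * ((G₁ - G₂) * P₁)‖ ≤ ‖(G₁ - G₂) * P₁‖ :=
      one_sub_proj_mul_le hQ₂h hQ₂2 _
    have c5 : ‖(G₂ * P₂) * (1 - G₁ * P₁)‖ ≤ ‖G₁ - G₂‖ * ‖P₁‖ := by
      rw [c1]
      refine c2.trans ?_
      rw [c3]
      exact c4.trans (Matrix.l2_opNorm_mul _ _)
    calc ‖T2‖ ≤ ‖P₂‖ * ‖(G₂ * P₂) * (1 - G₁ * P₁)‖ := by
          rw [hT2def]; exact Matrix.l2_opNorm_mul _ _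
      _ ≤ ‖P₂‖ * (‖G₁ - G₂‖ * ‖P₁‖) := mul_le_mul_of_nonneg_left c5 (norm_nonneg _)
      _ = β := by rw [hEnorm]
  have b3 : ‖T3‖ ≤ β := by
    have d1 : ‖T3‖ ≤ ‖(P₂ * G₂ - 1) * (P₁ * G₁)‖ * ‖P₁‖ := by
      rw [hT3def]; exact Matrix.l2_opNorm_mul _ _
    have d2 : (P₂ * G₂ - 1) * (P₁ * G₁) = -((1 - P₂ * G₂) * (P₁ * G₁)) := by
      rw [Matrix.sub_mul, Matrix.sub_mul, Matrix.one_mul, neg_sub]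
    have d3 : ‖(P₂ * G₂ - 1) * (P₁ * G₁)‖ = ‖(1 - P₂ * G₂) * (P₁ * G₁)‖ := by
      rw [d2, norm_neg]
    have d4 : ‖(1 - P₂ * G₂) * (P₁ * G₁)‖ ≤ ‖(1 - P₁ * G₁) * (P₂ * G₂)‖ :=
      gap_le hR₂h hR₂2 hR₁h hR₁2 hrR.symm
    have d5 : ‖(1 - P₁ * G₁) * (P₂ * G₂)‖ = ‖(P₂ * G₂) * (1 - P₁ * G₁)‖ := by
      calc ‖(1 - P₁ * G₁) * (P₂ * G₂)‖ = ‖((1 - P₁ * G₁) * (P₂ * G₂))ᴴ‖ :=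
            (Matrix.l2_opNorm_conjTranspose _).symm
        _ = ‖(P₂ * G₂) * (1 - P₁ * G₁)‖ := by
            rw [Matrix.conjTranspose_mul, Matrix.conjTranspose_sub, Matrix.conjTranspose_one,
              hR₁h, hR₂h]
    have z2 : (P₂ * G₁) * (1 - P₁ * G₁) = 0 := by
      rw [Matrix.mul_sub, Matrix.mul_one, Matrix.mul_assoc P₂ G₁ (P₁ * G₁), h11', sub_self]
    have d6 : (P₂ * G₂) * (1 - P₁ * G₁) = (P₂ * (G₂ - G₁)) * (1 - P₁ * G₁) := by
      rw [Matrix.mul_sub P₂ G₂ G₁, Matrix.sub_mul, z2, sub_zero]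
    have d7 : ‖(P₂ * (G₂ - G₁)) * (1 - P₁ * G₁)‖ ≤ ‖P₂ * (G₂ - G₁)‖ :=
      mul_one_sub_proj_le hR₁h hR₁2 _
    have d8 : ‖P₂ * (G₂ - G₁)‖ ≤ ‖P₂‖ * ‖G₂ - G₁‖ := Matrix.l2_opNorm_mul _ _
    have d9 : ‖(P₂ * G₂ - 1) * (P₁ * G₁)‖ ≤ ‖P₂‖ * ‖G₂ - G₁‖ := by
      rw [d3]
      refine d4.trans ?_
      rw [d5, d6]
      exact d7.trans d8
    calc ‖T3‖ ≤ ‖(P₂ * G₂ - 1) * (P₁ * G₁)‖ * ‖P₁‖ := d1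
      _ ≤ (‖P₂‖ * ‖G₂ - G₁‖) * ‖P₁‖ := mul_le_mul_of_nonneg_right d9 (norm_nonneg _)
      _ = β := by rw [hβdef]; ring
  -- assembly
  simp only [specNorm_eq]
  have hc0 : (0:ℝ) ≤ (1 + Real.sqrt 5) / 2 * ‖P₂‖ * ‖P₁‖ * ‖G₂ - G₁‖ := by positivity
  apply norm_le_bound _ hc0
  intro x
  have hab := proj_pyth hQ₁h hQ₁2 x
  have hdecx : LL (P₂ - P₁) x = (LL T1 x + LL T2 x) + LL T3 x := by
    rw [idec, LL_add, LL_add]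
  have horth : ⟪LL T1 x + LL T2 x, LL T3 x⟫ = 0 := by
    rw [← LL_add, LL_inner, ← LL_mul, hMN, LL_zero, inner_zero_right]
  have hpy : ‖LL (P₂ - P₁) x‖ ^ 2 = ‖LL T1 x + LL T2 x‖ ^ 2 + ‖LL T3 x‖ ^ 2 := by
    rw [hdecx]
    have hns := norm_add_sq (𝕜 := ℂ) (LL T1 x + LL T2 x) (LL T3 x)
    rw [horth] at hns
    simpa using hns
  have hT1x : LL T1 x = LL T1 (LL (G₁ * P₁) x) := by
    conv_lhs => rw [← j1, LL_mul]
  have hT3x : LL T3 x = LL T3 (LL (G₁ * P₁) x) := by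
    conv_lhs => rw [← j3, LL_mul]
  have hT2x : LL T2 (x - LL (G₁ * P₁) x) = LL T2 x := by
    rw [map_sub, ← LL_mul, j2, LL_zero, sub_zero]
  have hMle : ‖LL T1 x + LL T2 x‖ ≤ β * ‖LL (G₁ * P₁) x‖ + β * ‖x - LL (G₁ * P₁) x‖ := by
    have m1 : ‖LL T1 x‖ ≤ β * ‖LL (G₁ * P₁) x‖ := by
      rw [hT1x]
      exact (LL_apply_le _ _).trans (mul_le_mul_of_nonneg_right b1 (norm_nonneg _))
    have m2 : ‖LL T2 x‖ ≤ β * ‖x - LL (G₁ * P₁) x‖ := by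
      rw [← hT2x]
      exact (LL_apply_le _ _).trans (mul_le_mul_of_nonneg_right b2 (norm_nonneg _))
    exact (norm_add_le _ _).trans (add_le_add m1 m2)
  have hNle : ‖LL T3 x‖ ≤ β * ‖LL (G₁ * P₁) x‖ := by
    rw [hT3x]
    exact (LL_apply_le _ _).trans (mul_le_mul_of_nonneg_right b3 (norm_nonneg _))
  have final := wedin_numeric hβ0 (norm_nonneg _) (norm_nonneg _) (norm_nonneg _)
    (norm_nonneg _) (norm_nonneg _) (norm_nonneg x) hpy hMle hNle hab
  calc ‖LL (P₂ - P₁) x‖ ≤ (1 + Real.sqrt 5) / 2 * β * ‖x‖ := final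
    _ = (1 + Real.sqrt 5) / 2 * ‖P₂‖ * ‖P₁‖ * ‖G₂ - G₁‖ * ‖x‖ := by rw [hβdef]; ring
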